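/- For every n and every i with 0 < i < |Wₙ|, letting α denote the subword of W of length |Wₙ| beginning at position i, one has d(Wₙ, α) = (4·3ⁿ / (3^{n+1} − 1)) · d₀(Wₙ, α). -/

import Mathlib

open Filter

/-- The Chacón words: `W₀ = 0`, `W_{n+1} = Wₙ Wₙ 1 Wₙ`. -/
def chaconWord : ℕ → List (Fin 2)
  | 0 => [0]
  | n + 1 => chaconWord n ++ chaconWord n ++ [1] ++ chaconWord n

/-- `W` is the infinite word having every `Wₙ` as an initial segment. -/
def IsChaconInfWord (W : ℕ → Fin 2) : Prop :=
  ∀ n i, i < (chaconWord n).length → W i = (chaconWord n).getD i 0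

/-- A finite word `α` occurs in a finite word `β` at position `j`. -/
def OccursAt (α β : List (Fin 2)) (j : ℕ) : Prop :=
  j + α.length ≤ β.length ∧ ∀ k < α.length, β.getD (j + k) 0 = α.getD k 0

/-- A finite word `α` occurs in the infinite word `W` at position `j`. -/
def OccursAtInf (W : ℕ → Fin 2) (α : List (Fin 2)) (j : ℕ) : Prop :=
  ∀ k < α.length, W (j + k) = α.getD k 0

/-- The subword of the infinite word `W` of length `L` beginning at position `i`. -/
def subword (W : ℕ → Fin 2) (i L : ℕ) : List (Fin 2) :=
  (List.range L).map fun k => W (i + k)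

/-- The (normalized) Hamming distance `d` of two finite words. -/
noncomputable def hamming (α β : List (Fin 2)) : ℝ :=
  (((Finset.range α.length).filter fun i => α.getD i 0 ≠ β.getD i 0).card : ℝ) / α.length

/-- The modified 0-Hamming distance `d₀` of two finite words. -/
noncomputable def hamming0 (α β : List (Fin 2)) : ℝ :=
  (((Finset.range α.length).filter fun i => α.getD i 0 = 0 ∧ β.getD i 0 = 1).card : ℝ) /
    (((Finset.range α.length).filter fun i => α.getD i 0 = 0).card : ℝ)

-- auxiliary section
lemma chacon_len_succ (n : ℕ) :
    (chaconWord (n+1)).length = 3 * (chaconWord n).length + 1 := by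
  simp [chaconWord]; ring

lemma chacon_two_len (n : ℕ) : 2 * (chaconWord n).length + 1 = 3 ^ (n+1) := by
  induction n with
  | zero => rfl
  | succ n ih => rw [chacon_len_succ, pow_succ]; omega

lemma chacon_len_pos (n : ℕ) : 0 < (chaconWord n).length := by
  have := chacon_two_len n
  have : (0:ℕ) < 3 ^ (n+1) := by positivity
  omega

lemma chacon_getD_lt (n j : ℕ) (h : j < (chaconWord n).length) :
    (chaconWord (n+1)).getD j 0 = (chaconWord n).getD j 0 := by
  show (chaconWord n ++ chaconWord n ++ [1] ++ chaconWord n).getD j 0 = _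
  rw [List.getD_append, List.getD_append, List.getD_append] <;>
    (try simp only [List.length_append, List.length_singleton]) <;> omega

lemma chacon_getD_mid (n j : ℕ) (h1 : (chaconWord n).length ≤ j)
    (h2 : j < 2 * (chaconWord n).length) :
    (chaconWord (n+1)).getD j 0 = (chaconWord n).getD (j - (chaconWord n).length) 0 := by
  show (chaconWord n ++ chaconWord n ++ [1] ++ chaconWord n).getD j 0 = _
  rw [List.getD_append, List.getD_append, List.getD_append_right _ _ _ _ h1] <;>
    (try simp only [List.length_append, List.length_singleton]) <;> omega

/-- sum of getD over range length = sum over the list -/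
lemma sum_getD (l : List (Fin 2)) (f : Fin 2 → ℕ) :
    ∑ j ∈ Finset.range l.length, f (l.getD j 0) = (l.map f).sum := by
  induction l with
  | nil => simp
  | cons a t ih =>
      rw [List.length_cons, Finset.sum_range_succ']
      simp only [List.getD_cons_succ, List.getD_cons_zero, ih, List.map_cons, List.sum_cons]
      omega

def onesSum (l : List (Fin 2)) : ℕ := ∑ j ∈ Finset.range l.length, (l.getD j 0).val

lemma onesSum_succ (n : ℕ) : onesSum (chaconWord (n+1)) = 3 * onesSum (chaconWord n) + 1 := by
  unfold onesSum
  rw [sum_getD, sum_getD]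
  show ((chaconWord n ++ chaconWord n ++ [1] ++ chaconWord n).map Fin.val).sum = _
  simp [List.map_append, List.sum_append]
  ring

lemma two_onesSum (n : ℕ) : 2 * onesSum (chaconWord n) + 1 = 3 ^ n := by
  induction n with
  | zero => rfl
  | succ n ih => rw [onesSum_succ, pow_succ]; omega

def prefSum (W : ℕ → Fin 2) (m : ℕ) : ℕ := ∑ j ∈ Finset.range m, (W j).val

lemma prefSum_eq {W : ℕ → Fin 2} (hW : IsChaconInfWord W) (n m : ℕ)
    (hm : m ≤ (chaconWord n).length) :
    prefSum W m = ∑ j ∈ Finset.range m, ((chaconWord n).getD j 0).val := by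
  refine Finset.sum_congr rfl fun j hj => ?_
  rw [hW n j (lt_of_lt_of_le (Finset.mem_range.mp hj) hm)]

lemma prefSum_two {W : ℕ → Fin 2} (hW : IsChaconInfWord W) (n m : ℕ)
    (hm : m ≤ (chaconWord n).length) :
    prefSum W ((chaconWord n).length + m)
      = onesSum (chaconWord n) + ∑ j ∈ Finset.range m, ((chaconWord n).getD j 0).val := by
  set L := (chaconWord n).length with hLdef
  unfold prefSum
  rw [Finset.sum_range_add]
  congr 1
  · exact prefSum_eq hW n L le_rfl
  · refine Finset.sum_congr rfl fun k hk => ?_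
    have hk' : k < m := Finset.mem_range.mp hk
    have h1 : L + k < (chaconWord (n+1)).length := by
      rw [chacon_len_succ]; omega
    rw [hW (n+1) (L + k) h1, chacon_getD_mid n (L + k) (by omega) (by omega)]
    have hek : L + k - (chaconWord n).length = k := by omega
    rw [hek]

lemma onesSum_subword {W : ℕ → Fin 2} (hW : IsChaconInfWord W) (n i : ℕ)
    (hin : i ≤ (chaconWord n).length) :
    (∑ k ∈ Finset.range (chaconWord n).length, (W (i + k)).val) = onesSum (chaconWord n) := by
  set L := (chaconWord n).length with hLdef
  have h1 : (∑ k ∈ Finset.range L, (W (i + k)).val)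
      = ∑ j ∈ Finset.Ico i (i + L), (W j).val := by
    rw [Finset.sum_Ico_eq_sum_range]
    simp
  have h2 : prefSum W i + ∑ j ∈ Finset.Ico i (i + L), (W j).val = prefSum W (i + L) := by
    unfold prefSum
    rw [Finset.range_eq_Ico, Finset.range_eq_Ico]
    exact Finset.sum_Ico_consecutive (fun j => (W j).val) (Nat.zero_le i) (Nat.le_add_right i L)
  have h3 : prefSum W (i + L) = onesSum (chaconWord n)
      + ∑ j ∈ Finset.range i, ((chaconWord n).getD j 0).val := by
    rw [Nat.add_comm i L]; exact prefSum_two hW n i hin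
  have h4 : prefSum W i = ∑ j ∈ Finset.range i, ((chaconWord n).getD j 0).val :=
    prefSum_eq hW n i hin
  omega

theorem chacon_hamming_eq_hamming0 (W : ℕ → Fin 2) (hW : IsChaconInfWord W) (n i : ℕ)
    (hi0 : 0 < i) (hin : i < (chaconWord n).length) :
    hamming (chaconWord n) (subword W i (chaconWord n).length) =
      4 * 3 ^ n / (3 ^ (n + 1) - 1) *
        hamming0 (chaconWord n) (subword W i (chaconWord n).length) := by
  have hA : ∀ x y : Fin 2, ((if x = 0 ∧ y = 1 then 1 else 0) : ℕ) + x.val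
      = (if x = 1 ∧ y = 0 then 1 else 0) + y.val := by decide
  have hM : ∀ x y : Fin 2, ((if x ≠ y then 1 else 0) : ℕ)
      = (if x = 0 ∧ y = 1 then 1 else 0) + (if x = 1 ∧ y = 0 then 1 else 0) := by decide
  have hZ : ∀ x : Fin 2, ((if x = 0 then 1 else 0) : ℕ) + x.val = 1 := by decide
  set c := chaconWord n with hc
  set α := subword W i c.length with hα
  have hαget : ∀ j ∈ Finset.range c.length, α.getD j 0 = W (i + j) := by
    intro j hj
    have hj' : j < c.length := Finset.mem_range.mp hj
    rw [hα]
    unfold subword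
    rw [List.getD_eq_getElem _ _ (by simpa using hj')]
    simp
  have hones : ∑ j ∈ Finset.range c.length, (α.getD j 0).val
      = ∑ j ∈ Finset.range c.length, (c.getD j 0).val := by
    calc ∑ j ∈ Finset.range c.length, (α.getD j 0).val
        = ∑ j ∈ Finset.range c.length, (W (i + j)).val :=
          Finset.sum_congr rfl fun j hj => by rw [hαget j hj]
      _ = onesSum c := onesSum_subword hW n i (le_of_lt hin)
      _ = _ := rfl
  have hab : (((Finset.range c.length).filter fun j => c.getD j 0 = 0 ∧ α.getD j 0 = 1).card)
      = (((Finset.range c.length).filter fun j => c.getD j 0 = 1 ∧ α.getD j 0 = 0).card) := by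
    have h1 : (((Finset.range c.length).filter fun j => c.getD j 0 = 0 ∧ α.getD j 0 = 1).card)
        + ∑ j ∈ Finset.range c.length, (c.getD j 0).val
        = (((Finset.range c.length).filter fun j => c.getD j 0 = 1 ∧ α.getD j 0 = 0).card)
        + ∑ j ∈ Finset.range c.length, (α.getD j 0).val := by
      rw [Finset.card_filter, Finset.card_filter, ← Finset.sum_add_distrib,
        ← Finset.sum_add_distrib]
      exact Finset.sum_congr rfl fun j _ => hA _ _
    omega
  have hm : (((Finset.range c.length).filter fun j => c.getD j 0 ≠ α.getD j 0).card)
      = (((Finset.range c.length).filter fun j => c.getD j 0 = 0 ∧ α.getD j 0 = 1).card)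
      + (((Finset.range c.length).filter fun j => c.getD j 0 = 1 ∧ α.getD j 0 = 0).card) := by
    rw [Finset.card_filter, Finset.card_filter, Finset.card_filter, ← Finset.sum_add_distrib]
    exact Finset.sum_congr rfl fun j _ => hM _ _
  have hzs : (((Finset.range c.length).filter fun j => c.getD j 0 = 0).card)
      + onesSum c = c.length := by
    rw [Finset.card_filter]
    unfold onesSum
    rw [← Finset.sum_add_distrib]
    simp [hZ]
  have hz : (((Finset.range c.length).filter fun j => c.getD j 0 = 0).card) = 3 ^ n := by
    have h1 := chacon_two_len n
    have h2 := two_onesSum n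
    simp only [← hc] at h1 h2
    have h3 : (3:ℕ) ^ (n + 1) = 3 * 3 ^ n := by rw [pow_succ]; ring
    omega
  have hL2 : (2:ℝ) * c.length = 3 ^ (n + 1) - 1 := by
    have h1 := chacon_two_len n
    simp only [← hc] at h1
    have h2 := congrArg (Nat.cast : ℕ → ℝ) h1
    push_cast at h2
    linarith
  have hLpos : (0:ℝ) < c.length := by
    have := chacon_len_pos n
    simp only [← hc] at this
    exact_mod_cast this
  unfold hamming hamming0
  rw [hm, hab, hz]
  push_cast
  rw [show ((3:ℝ) ^ (n + 1) - 1) = 2 * c.length from hL2.symm]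
  have h3n : ((3:ℝ) ^ n) ≠ 0 := by positivity
  field_simp
  ring
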